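/- For every density matrix ρ on ℂ^d, M_Re(ρ) ≥ 1 − √( 1/d + (1/d)·√((d−1)² − (d−1)·M_tr(ρ)²) ). -/

import Mathlib

open Matrix Complex ComplexOrder Classical

/-- The positive semidefinite square root of a matrix (junk value `0` if not PSD). -/
noncomputable def psqrt {n : Type*} [Fintype n] [DecidableEq n] (A : Matrix n n ℂ) :
    Matrix n n ℂ :=
  if h : A.PosSemidef then
    (h.1.eigenvectorUnitary : Matrix n n ℂ) *
      diagonal ((fun x : ℝ => (x : ℂ)) ∘ Real.sqrt ∘ h.1.eigenvalues) *
      (star h.1.eigenvectorUnitary : Matrix n n ℂ)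
  else 0

/-- Entrywise complex conjugate of a matrix. -/
def mconj {m n : Type*} (A : Matrix m n ℂ) : Matrix m n ℂ := A.map (starRingEnd ℂ)

/-- Fidelity `F(ρ,σ) = Tr √(√ρ σ √ρ)`. -/
noncomputable def fidelity {n : Type*} [Fintype n] [DecidableEq n] (ρ σ : Matrix n n ℂ) : ℝ :=
  ((psqrt (psqrt ρ * σ * psqrt ρ)).trace).re

/-- The real part state `Re(ρ) = (ρ + ρ*)/2`. -/
noncomputable def reState {n : Type*} (ρ : Matrix n n ℂ) : Matrix n n ℂ :=
  ((1 : ℂ)/2) • (ρ + mconj ρ)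

/-- The imaginarity measure `M_Re(ρ) = 1 - F(ρ, Re(ρ))`. -/
noncomputable def MRe {n : Type*} [Fintype n] [DecidableEq n] (ρ : Matrix n n ℂ) : ℝ :=
  1 - fidelity ρ (reState ρ)

/-- A density matrix: positive semidefinite with trace 1. -/
def IsDensityMatrix {n : Type*} [Fintype n] (ρ : Matrix n n ℂ) : Prop :=
  ρ.PosSemidef ∧ ρ.trace = 1

/-- The trace norm `‖A‖_tr = Tr √(Aᴴ A)`. -/
noncomputable def trNorm {n : Type*} [Fintype n] [DecidableEq n] (A : Matrix n n ℂ) : ℝ :=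
  ((psqrt (Aᴴ * A)).trace).re

/-- The trace norm imaginarity `M_tr(ρ) = (1/2)‖ρ - ρ*‖_tr`. -/
noncomputable def Mtr {n : Type*} [Fintype n] [DecidableEq n] (ρ : Matrix n n ℂ) : ℝ :=
  (1/2) * trNorm (ρ - mconj ρ)

/-- The purity `P(ρ) = Tr(ρ²)`. -/
noncomputable def purity {n : Type*} [Fintype n] [DecidableEq n] (ρ : Matrix n n ℂ) : ℝ :=
  ((ρ * ρ).trace).re

open scoped MatrixOrder in
lemma psqrt_eq_cfcsqrt {m : Type*} [Fintype m] [DecidableEq m] {A : Matrix m m ℂ}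
    (hA : A.PosSemidef) : psqrt A = CFC.sqrt A := by
  rw [psqrt, dif_pos hA, CFC.sqrt_eq_real_sqrt A hA.nonneg, cfcₙ_eq_cfc, hA.1.cfc_eq]
  simp only [IsHermitian.cfc, Unitary.conjStarAlgAut_apply]
  rfl

open scoped MatrixOrder in
lemma psqrt_conjTranspose_of {m : Type*} [Fintype m] [DecidableEq m] {A : Matrix m m ℂ}
    (hA : A.PosSemidef) : (psqrt A)ᴴ = psqrt A := by
  rw [psqrt_eq_cfcsqrt hA]; exact (Matrix.nonneg_iff_posSemidef.mp (CFC.sqrt_nonneg A)).1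

open scoped MatrixOrder in
lemma psqrt_mul_self_of {m : Type*} [Fintype m] [DecidableEq m] {A : Matrix m m ℂ}
    (hA : A.PosSemidef) : psqrt A * psqrt A = A := by
  rw [psqrt_eq_cfcsqrt hA]; exact CFC.sqrt_mul_sqrt_self A hA.nonneg

open scoped MatrixOrder in
lemma psqrt_eq_of_mul_self {m : Type*} [Fintype m] [DecidableEq m] {A B : Matrix m m ℂ}
    (hB : B.PosSemidef) (hA : A.PosSemidef) (h : B * B = A) : psqrt A = B := by
  rw [psqrt_eq_cfcsqrt hA]; exact CFC.sqrt_unique h hB.nonneg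

set_option linter.unusedSectionVars false
set_option linter.unusedVariables false
set_option maxHeartbeats 2000000

section Part1
variable {m : Type*} [Fintype m] [DecidableEq m]

lemma trace_mul_conjTranspose_self_eq (A : Matrix m m ℂ) :
    (A * Aᴴ).trace = ((∑ i, ∑ j, Complex.normSq (A i j) : ℝ) : ℂ) := by
  simp only [Matrix.trace, Matrix.diag, Matrix.mul_apply, Matrix.conjTranspose_apply]
  push_cast
  refine Finset.sum_congr rfl fun i _ => Finset.sum_congr rfl fun j _ => ?_
  rw [Complex.star_def, Complex.mul_conj]

lemma trace_mul_conjTranspose_self_re_nonneg (A : Matrix m m ℂ) :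
    0 ≤ (A * Aᴴ).trace.re := by
  rw [trace_mul_conjTranspose_self_eq, Complex.ofReal_re]
  exact Finset.sum_nonneg fun i _ => Finset.sum_nonneg fun j _ => Complex.normSq_nonneg _

lemma diag_sqrt_mul_self (f : m → ℝ) (hf : ∀ i, 0 ≤ f i) :
    Matrix.diagonal (fun i => (Real.sqrt (f i) : ℂ)) *
      Matrix.diagonal (fun i => (Real.sqrt (f i) : ℂ)) =
      Matrix.diagonal (fun i => (f i : ℂ)) := by
  have h : (fun i => (Real.sqrt (f i) : ℂ) * (Real.sqrt (f i) : ℂ)) = fun i => (f i : ℂ) :=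
    funext fun i => by rw [← Complex.ofReal_mul, Real.mul_self_sqrt (hf i)]
  rw [Matrix.diagonal_mul_diagonal, h]

lemma psd_unitary_diag (U : Matrix m m ℂ) (hU2 : Uᴴ * U = 1)
    (f : m → ℝ) (hf : ∀ i, 0 ≤ f i) :
    (U * Matrix.diagonal (fun i => (f i : ℂ)) * Uᴴ).PosSemidef := by
  have key : U * Matrix.diagonal (fun i => (f i : ℂ)) * Uᴴ
      = (Matrix.diagonal (fun i => (Real.sqrt (f i) : ℂ)) * Uᴴ)ᴴ
        * (Matrix.diagonal (fun i => (Real.sqrt (f i) : ℂ)) * Uᴴ) := by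
    rw [Matrix.conjTranspose_mul, Matrix.conjTranspose_conjTranspose,
      Matrix.diagonal_conjTranspose]
    have hst : (star fun i => (Real.sqrt (f i) : ℂ)) = fun i => (Real.sqrt (f i) : ℂ) := by
      funext i; simp [Pi.star_apply, Complex.star_def, Complex.conj_ofReal]
    rw [hst]
    conv_rhs => rw [Matrix.mul_assoc U, ← Matrix.mul_assoc (Matrix.diagonal _),
      diag_sqrt_mul_self f hf, ← Matrix.mul_assoc]
  rw [key]
  exact Matrix.posSemidef_conjTranspose_mul_self _

lemma psqrt_unitary_diag (U : Matrix m m ℂ) (hU2 : Uᴴ * U = 1)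
    (f : m → ℝ) (hf : ∀ i, 0 ≤ f i) :
    psqrt (U * Matrix.diagonal (fun i => (f i : ℂ)) * Uᴴ)
      = U * Matrix.diagonal (fun i => (Real.sqrt (f i) : ℂ)) * Uᴴ := by
  have h1 := psd_unitary_diag U hU2 f hf
  have h2 := psd_unitary_diag U hU2 (fun i => Real.sqrt (f i)) (fun i => Real.sqrt_nonneg _)
  refine psqrt_eq_of_mul_self h2 h1 ?_
  have h3 : Uᴴ * (U * Matrix.diagonal (fun i => (Real.sqrt (f i) : ℂ)) * Uᴴ)
      = Matrix.diagonal (fun i => (Real.sqrt (f i) : ℂ)) * Uᴴ := by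
    rw [← Matrix.mul_assoc, ← Matrix.mul_assoc, hU2, Matrix.one_mul]
  rw [Matrix.mul_assoc (U * Matrix.diagonal _) Uᴴ, h3]
  conv_lhs => rw [Matrix.mul_assoc U, ← Matrix.mul_assoc (Matrix.diagonal _),
    diag_sqrt_mul_self f hf, ← Matrix.mul_assoc]

lemma trace_unitary_diag (U : Matrix m m ℂ) (hU2 : Uᴴ * U = 1) (f : m → ℂ) :
    (U * Matrix.diagonal f * Uᴴ).trace = ∑ i, f i := by
  rw [Matrix.trace_mul_cycle, hU2, Matrix.one_mul, Matrix.trace_diagonal]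

/-- spectral decomposition package for PSD matrices -/
lemma Matrix.PosSemidef.exists_unitary_diag {A : Matrix m m ℂ} (hA : A.PosSemidef) :
    ∃ (U : Matrix m m ℂ) (f : m → ℝ), U * Uᴴ = 1 ∧ Uᴴ * U = 1 ∧ (∀ i, 0 ≤ f i) ∧
      A = U * Matrix.diagonal (fun i => (f i : ℂ)) * Uᴴ := by
  refine ⟨hA.1.eigenvectorUnitary, hA.1.eigenvalues, ?_, ?_, hA.eigenvalues_nonneg, ?_⟩
  · have := (Matrix.mem_unitaryGroup_iff).mp hA.1.eigenvectorUnitary.2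
    simpa [Matrix.star_eq_conjTranspose] using this
  · have := (Matrix.mem_unitaryGroup_iff').mp hA.1.eigenvectorUnitary.2
    simpa [Matrix.star_eq_conjTranspose] using this
  · have := hA.1.spectral_theorem
    simpa [Matrix.star_eq_conjTranspose, Function.comp_def] using this

end Part1

section Part2
variable {d : ℕ}
abbrev PairIdx (d : ℕ) : Type := {p : Fin d × Fin d // p.1 < p.2}

lemma sum_split {M : Type*} [AddCommMonoid M] (F : Fin d → Fin d → M) :
    ∑ i, ∑ j, F i j = (∑ p : PairIdx d, F p.1.1 p.1.2) +
      ((∑ p : PairIdx d, F p.1.2 p.1.1) + ∑ i, F i i) := by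
  classical
  have h1 : ∑ p : PairIdx d, F p.1.1 p.1.2
      = ∑ p ∈ Finset.univ.filter (fun p : Fin d × Fin d => p.1 < p.2), F p.1 p.2 := by
    refine Finset.sum_bij (fun (p : PairIdx d) _ => (p : Fin d × Fin d)) ?_ ?_ ?_ ?_
    · intro a _; simp [a.2]
    · intro a _ b _ h; exact Subtype.ext h
    · intro b hb; exact ⟨⟨b, by simpa using hb⟩, Finset.mem_univ _, rfl⟩
    · intro a _; rfl
  have h2 : ∑ p : PairIdx d, F p.1.2 p.1.1
      = ∑ p ∈ Finset.univ.filter (fun p : Fin d × Fin d => p.2 < p.1), F p.1 p.2 := by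
    refine Finset.sum_bij (fun (p : PairIdx d) _ => ((p : Fin d × Fin d).2, (p : Fin d × Fin d).1)) ?_ ?_ ?_ ?_
    · intro a _; simpa using a.2
    · intro a _ b _ h
      have h1 := congrArg Prod.fst h
      have h2 := congrArg Prod.snd h
      exact Subtype.ext (Prod.ext h2 h1)
    · intro b hb; exact ⟨⟨(b.2, b.1), by simpa using hb⟩, Finset.mem_univ _, rfl⟩
    · intro a _; rfl
  have h3 : ∑ i, F i i
      = ∑ p ∈ Finset.univ.filter (fun p : Fin d × Fin d => p.1 = p.2), F p.1 p.2 := by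
    refine Finset.sum_bij (fun (i : Fin d) _ => (i, i)) ?_ ?_ ?_ ?_
    · intro a _; simp
    · intro a _ b _ h; exact congrArg Prod.fst h
    · intro b hb
      refine ⟨b.1, Finset.mem_univ _, ?_⟩
      have : b.1 = b.2 := by simpa using hb
      exact Prod.ext rfl this
    · intro a _; rfl
  rw [h1, h2, h3, ← Fintype.sum_prod_type']
  rw [← Finset.sum_filter_add_sum_filter_not Finset.univ (fun p : Fin d × Fin d => p.1 < p.2)
    (fun p => F p.1 p.2)]
  congr 1
  rw [← Finset.sum_filter_add_sum_filter_not
    (Finset.univ.filter (fun p : Fin d × Fin d => ¬ p.1 < p.2))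
    (fun p : Fin d × Fin d => p.2 < p.1) (fun p => F p.1 p.2),
    Finset.filter_filter, Finset.filter_filter]
  congr 2
  · ext p
    simp only [Finset.mem_filter, Finset.mem_univ, true_and, Fin.lt_def]
    omega
  · ext p
    simp only [Finset.mem_filter, Finset.mem_univ, true_and, Fin.lt_def, Fin.ext_iff, not_lt]
    omega

end Part2

section Part3
variable {d : ℕ}
/-- second compound (exterior square) of a matrix -/
def cmp2 (A : Matrix (Fin d) (Fin d) ℂ) : Matrix (PairIdx d) (PairIdx d) ℂ :=
  fun p q => A p.1.1 q.1.1 * A p.1.2 q.1.2 - A p.1.1 q.1.2 * A p.1.2 q.1.1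

lemma cmp2_conjTranspose (A : Matrix (Fin d) (Fin d) ℂ) : (cmp2 A)ᴴ = cmp2 Aᴴ := by
  ext p q
  simp only [cmp2, Matrix.conjTranspose_apply, star_sub, star_mul']
  ring

lemma cmp2_one : cmp2 (1 : Matrix (Fin d) (Fin d) ℂ) = 1 := by
  ext ⟨⟨i, j⟩, hij⟩ ⟨⟨k, l⟩, hkl⟩
  simp only [cmp2, Matrix.one_apply, Subtype.mk.injEq, Prod.mk.injEq]
  simp only [Fin.lt_def] at hij hkl
  split_ifs <;> simp_all [Fin.ext_iff] <;> omega

lemma cmp2_diagonal (f : Fin d → ℂ) :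
    cmp2 (Matrix.diagonal f) = Matrix.diagonal (fun p : PairIdx d => f p.1.1 * f p.1.2) := by
  ext ⟨⟨i, j⟩, hij⟩ ⟨⟨k, l⟩, hkl⟩
  simp only [cmp2, Matrix.diagonal_apply, Subtype.mk.injEq, Prod.mk.injEq]
  simp only [Fin.lt_def] at hij hkl
  split_ifs <;> simp_all [Fin.ext_iff] <;> omega

lemma cmp2_mul (A B : Matrix (Fin d) (Fin d) ℂ) : cmp2 (A * B) = cmp2 A * cmp2 B := by
  ext ⟨⟨i, j⟩, hij⟩ ⟨⟨k, l⟩, hkl⟩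
  rw [Matrix.mul_apply]
  set F : Fin d → Fin d → ℂ := fun m n =>
    (A i m * A j n - A i n * A j m) * (B m k * B n l - B n k * B m l) with hF
  have hsymm : ∀ m n, F n m = F m n := fun m n => by simp only [hF]; ring
  have hdiag : ∀ i', F i' i' = 0 := fun i' => by simp only [hF]; ring
  have f1 : ∑ m, ∑ n, (A i m * B m k) * (A j n * B n l) = (A * B) i k * (A * B) j l := by
    rw [Matrix.mul_apply, Matrix.mul_apply, Finset.sum_mul_sum]
  have f2 : ∑ m, ∑ n, (A i n * B n k) * (A j m * B m l) = (A * B) i k * (A * B) j l := by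
    rw [Finset.sum_comm, Matrix.mul_apply, Matrix.mul_apply, Finset.sum_mul_sum]
  have f3 : ∑ m, ∑ n, (A i m * B m l) * (A j n * B n k) = (A * B) i l * (A * B) j k := by
    rw [Matrix.mul_apply, Matrix.mul_apply, Finset.sum_mul_sum]
  have f4 : ∑ m, ∑ n, (A i n * B n l) * (A j m * B m k) = (A * B) i l * (A * B) j k := by
    rw [Finset.sum_comm, Matrix.mul_apply, Matrix.mul_apply, Finset.sum_mul_sum]
  have expand : ∑ m, ∑ n, F m n
      = 2 * ((A * B) i k * (A * B) j l - (A * B) i l * (A * B) j k) := by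
    have : ∀ m n : Fin d, F m n = (A i m * B m k) * (A j n * B n l)
        + (A i n * B n k) * (A j m * B m l)
        - (A i m * B m l) * (A j n * B n k)
        - (A i n * B n l) * (A j m * B m k) := fun m n => by simp only [hF]; ring
    calc ∑ m, ∑ n, F m n
        = ∑ m, ∑ n, ((A i m * B m k) * (A j n * B n l)
            + (A i n * B n k) * (A j m * B m l)
            - (A i m * B m l) * (A j n * B n k)
            - (A i n * B n l) * (A j m * B m k)) :=
          Finset.sum_congr rfl fun m _ => Finset.sum_congr rfl fun n _ => this m n
      _ = 2 * ((A * B) i k * (A * B) j l - (A * B) i l * (A * B) j k) := by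
          simp only [Finset.sum_sub_distrib, Finset.sum_add_distrib, f1, f2, f3, f4]
          ring
  have split := sum_split F
  rw [expand] at split
  have pairsum : ∑ p : PairIdx d, F p.1.1 p.1.2
      = (A * B) i k * (A * B) j l - (A * B) i l * (A * B) j k := by
    have h2 : (∑ p : PairIdx d, F p.1.2 p.1.1) = ∑ p : PairIdx d, F p.1.1 p.1.2 :=
      Finset.sum_congr rfl fun p _ => hsymm _ _
    have h3 : ∑ i', F i' i' = 0 := Finset.sum_eq_zero fun i' _ => hdiag i'
    rw [h2, h3, add_zero, ← two_mul] at split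
    exact mul_left_cancel₀ two_ne_zero split.symm
  rw [show cmp2 (A * B) ⟨(i, j), hij⟩ ⟨(k, l), hkl⟩
      = (A * B) i k * (A * B) j l - (A * B) i l * (A * B) j k from rfl, ← pairsum]
  refine Finset.sum_congr rfl fun r _ => ?_
  show F r.1.1 r.1.2 = cmp2 A ⟨(i,j),hij⟩ r * cmp2 B r ⟨(k,l),hkl⟩
  simp only [hF, cmp2]
  ring

end Part3

section Part4
variable {m : Type*} [Fintype m] [DecidableEq m]
/-- trace of Aᴴ * A as sum of squared absolute values -/
lemma trace_conjTranspose_mul_self_eq (A : Matrix m m ℂ) :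
    (Aᴴ * A).trace = ((∑ j, ∑ i, (‖A i j‖)^2 : ℝ) : ℂ) := by
  simp only [Matrix.trace, Matrix.diag, Matrix.mul_apply, Matrix.conjTranspose_apply]
  push_cast
  refine Finset.sum_congr rfl fun j _ => Finset.sum_congr rfl fun i _ => ?_
  rw [Complex.star_def, ← Complex.normSq_eq_conj_mul_self, ← Complex.sq_norm]
  push_cast
  ring

/-- Cauchy-Schwarz for the trace inner product -/
lemma abs_trace_conjTranspose_mul_le (A B : Matrix m m ℂ) :
    ‖(Aᴴ * B).trace‖ ≤
      Real.sqrt ((Aᴴ * A).trace.re) * Real.sqrt ((Bᴴ * B).trace.re) := by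
  have ht : (Aᴴ * B).trace = ∑ j, ∑ i, star (A i j) * B i j := by
    simp [Matrix.trace, Matrix.diag, Matrix.mul_apply, Matrix.conjTranspose_apply]
  have h1 : ‖(Aᴴ * B).trace‖
      ≤ ∑ j, ∑ i, ‖A i j‖ * ‖B i j‖ := by
    rw [ht]
    refine (norm_sum_le _ _).trans (Finset.sum_le_sum fun j _ => ?_)
    refine (norm_sum_le _ _).trans (Finset.sum_le_sum fun i _ => ?_)
    rw [norm_mul, Complex.star_def, Complex.norm_conj]
  have h2 : (∑ j, ∑ i, ‖A i j‖ * ‖B i j‖)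
      ≤ Real.sqrt (∑ j, ∑ i, (‖A i j‖)^2)
        * Real.sqrt (∑ j, ∑ i, (‖B i j‖)^2) := by
    rw [← Real.sqrt_mul (by positivity)]
    refine (Real.le_sqrt (by positivity) (by positivity)).mpr ?_
    have hcs := Finset.sum_mul_sq_le_sq_mul_sq (Finset.univ : Finset (m × m))
      (fun p => ‖A p.2 p.1‖) (fun p => ‖B p.2 p.1‖)
    simp only [← Fintype.sum_prod_type'] at *
    exact hcs
  have e1 : (Aᴴ * A).trace.re = ∑ j, ∑ i, (‖A i j‖)^2 := by
    rw [trace_conjTranspose_mul_self_eq, Complex.ofReal_re]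
  have e2 : (Bᴴ * B).trace.re = ∑ j, ∑ i, (‖B i j‖)^2 := by
    rw [trace_conjTranspose_mul_self_eq, Complex.ofReal_re]
  rw [e1, e2]
  exact h1.trans h2

/-- Hölder-type bound: trace norm of a product is at most the product of Frobenius norms. -/
lemma trace_psqrt_mul_le (X Y : Matrix m m ℂ) :
    ((psqrt ((X * Y) * (X * Y)ᴴ)).trace).re
      ≤ Real.sqrt ((Xᴴ * X).trace.re) * Real.sqrt ((Yᴴ * Y).trace.re) := by
  set G := X * Y with hG
  clear_value G
  have hH : (G * Gᴴ).PosSemidef := Matrix.posSemidef_self_mul_conjTranspose G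
  obtain ⟨U, g, hU1, hU2, hg, hspec⟩ := hH.exists_unitary_diag
  -- LHS is ∑ √g
  have hLHS : ((psqrt (G * Gᴴ)).trace).re = ∑ i, Real.sqrt (g i) := by
    rw [hspec, psqrt_unitary_diag U hU2 g hg, trace_unitary_diag U hU2]
    rw [← Complex.ofReal_sum, Complex.ofReal_re]
  set c : m → ℂ := fun i => if g i = 0 then 0 else (((Real.sqrt (g i))⁻¹ : ℝ) : ℂ) with hc
  set Z : Matrix m m ℂ := Gᴴ * U * Matrix.diagonal c with hZ
  clear_value Z
  have hdiagU : Uᴴ * (G * Gᴴ) * U = Matrix.diagonal (fun i => (g i : ℂ)) := by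
    rw [hspec, ← Matrix.mul_assoc, ← Matrix.mul_assoc, hU2, Matrix.one_mul,
      Matrix.mul_assoc, hU2, Matrix.mul_one]
  have key1 : Uᴴ * G * Z = Matrix.diagonal (fun i => (g i : ℂ) * c i) := by
    have e : Uᴴ * G * Z = (Uᴴ * (G * Gᴴ) * U) * Matrix.diagonal c := by
      rw [hZ]; simp only [Matrix.mul_assoc]
    rw [e, hdiagU, Matrix.diagonal_mul_diagonal]
  have key2 : (fun i => (g i : ℂ) * c i) = fun i => ((Real.sqrt (g i) : ℝ) : ℂ) := by
    funext i
    by_cases hgi : g i = 0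
    · simp [hc, hgi]
    · have hgpos : 0 < g i := lt_of_le_of_ne (hg i) (Ne.symm hgi)
      have hsq : Real.sqrt (g i) ≠ 0 := by positivity
      simp only [hc, if_neg hgi]
      rw [← Complex.ofReal_mul]
      congr 1
      rw [show g i = Real.sqrt (g i) * Real.sqrt (g i) from (Real.mul_self_sqrt (hg i)).symm]
      field_simp
      rw [Real.sqrt_sq (Real.sqrt_nonneg _)]
  have traceC : (Uᴴ * G * Z).trace = ((∑ i, Real.sqrt (g i) : ℝ) : ℂ) := by
    rw [key1, key2, Matrix.trace_diagonal, Complex.ofReal_sum]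
  -- CS application
  have hCS := abs_trace_conjTranspose_mul_le (Xᴴ * U) (Y * Z)
  have hAB : (Xᴴ * U)ᴴ * (Y * Z) = Uᴴ * G * Z := by
    rw [Matrix.conjTranspose_mul, Matrix.conjTranspose_conjTranspose, hG]
    simp only [Matrix.mul_assoc]
  have habs : ‖((Xᴴ * U)ᴴ * (Y * Z)).trace‖ = ∑ i, Real.sqrt (g i) := by
    rw [hAB, traceC, Complex.norm_real, Real.norm_eq_abs, _root_.abs_of_nonneg
      (Finset.sum_nonneg fun i _ => Real.sqrt_nonneg _)]
  -- first factor
  have hfac1 : ((Xᴴ * U)ᴴ * (Xᴴ * U)).trace = (Xᴴ * X).trace := by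
    rw [Matrix.conjTranspose_mul, Matrix.conjTranspose_conjTranspose]
    calc (Uᴴ * X * (Xᴴ * U)).trace = (Uᴴ * (X * Xᴴ) * U).trace := by
          simp only [Matrix.mul_assoc]
      _ = (U * Uᴴ * (X * Xᴴ)).trace := by
          rw [Matrix.trace_mul_cycle, Matrix.mul_assoc]
      _ = (Xᴴ * X).trace := by rw [hU1, Matrix.one_mul, Matrix.trace_mul_comm]
  -- second factor bound
  have hZZ : Zᴴ * Z = Matrix.diagonal (fun i => if g i = 0 then (0 : ℂ) else 1) := by
    have hZH : Zᴴ = Matrix.diagonal (star c) * (Uᴴ * G) := by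
      rw [hZ, Matrix.conjTranspose_mul, Matrix.conjTranspose_mul,
        Matrix.diagonal_conjTranspose, Matrix.conjTranspose_conjTranspose]
    rw [hZH, hZ]
    have e : Matrix.diagonal (star c) * (Uᴴ * G) * (Gᴴ * U * Matrix.diagonal c)
        = Matrix.diagonal (star c) * (Uᴴ * (G * Gᴴ) * U) * Matrix.diagonal c := by
      simp only [Matrix.mul_assoc]
    rw [e, hdiagU, Matrix.diagonal_mul_diagonal, Matrix.diagonal_mul_diagonal]
    refine congrArg Matrix.diagonal (funext fun i => ?_)
    by_cases hgi : g i = 0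
    · simp [hc, hgi]
    · have hgpos : 0 < g i := lt_of_le_of_ne (hg i) (Ne.symm hgi)
      have hsq : Real.sqrt (g i) ≠ 0 := by positivity
      simp only [hc, if_neg hgi, Pi.star_apply, Complex.star_def, Complex.conj_ofReal]
      rw [← Complex.ofReal_mul, ← Complex.ofReal_mul]
      rw [show ((Real.sqrt (g i))⁻¹ * g i) * (Real.sqrt (g i))⁻¹
          = (g i / (Real.sqrt (g i) * Real.sqrt (g i))) by ring,
        Real.mul_self_sqrt (hg i), div_self hgi]
      norm_num
  have hZdiag : Z * Matrix.diagonal (fun i => if g i = 0 then (0 : ℂ) else 1) = Z := by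
    rw [hZ, Matrix.mul_assoc, Matrix.diagonal_mul_diagonal]
    refine congrArg (fun M => (Gᴴ * U) * M) (congrArg Matrix.diagonal (funext fun i => ?_))
    by_cases hgi : g i = 0 <;> simp [hc, hgi]
  have hPi2 : (Z * Zᴴ) * (Z * Zᴴ) = Z * Zᴴ := by
    calc (Z * Zᴴ) * (Z * Zᴴ) = Z * (Zᴴ * Z) * Zᴴ := by simp only [Matrix.mul_assoc]
      _ = Z * Zᴴ := by rw [hZZ, hZdiag]
  have hPiH : (Z * Zᴴ)ᴴ = Z * Zᴴ := by
    rw [Matrix.conjTranspose_mul, Matrix.conjTranspose_conjTranspose]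
  have hfac2 : ((Y * Z)ᴴ * (Y * Z)).trace.re ≤ ((Yᴴ * Y).trace).re := by
    have e : ((Y * Z)ᴴ * (Y * Z)).trace = ((Yᴴ * Y) * (Z * Zᴴ)).trace := by
      calc ((Y * Z)ᴴ * (Y * Z)).trace = (Zᴴ * (Yᴴ * Y) * Z).trace := by
            rw [Matrix.conjTranspose_mul]; simp only [Matrix.mul_assoc]
        _ = (Z * (Zᴴ * (Yᴴ * Y))).trace := Matrix.trace_mul_comm _ Z
        _ = ((Yᴴ * Y) * (Z * Zᴴ)).trace := by
            rw [← Matrix.mul_assoc]; exact Matrix.trace_mul_comm _ _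
    have hC : (Yᴴ * Y).trace - ((Yᴴ * Y) * (Z * Zᴴ)).trace
        = ((Y * (1 - Z * Zᴴ)) * (Y * (1 - Z * Zᴴ))ᴴ).trace := by
      have h1P : (1 - Z * Zᴴ) * (1 - Z * Zᴴ) = 1 - Z * Zᴴ := by
        rw [Matrix.sub_mul, Matrix.one_mul, Matrix.mul_sub, Matrix.mul_one, hPi2]
        abel
      have hsub : (1 - Z * Zᴴ)ᴴ = 1 - Z * Zᴴ := by
        rw [Matrix.conjTranspose_sub, Matrix.conjTranspose_one, hPiH]
      rw [Matrix.conjTranspose_mul, hsub]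
      calc (Yᴴ * Y).trace - ((Yᴴ * Y) * (Z * Zᴴ)).trace
          = ((Yᴴ * Y) * (1 - Z * Zᴴ)).trace := by
            rw [Matrix.mul_sub, Matrix.mul_one, Matrix.trace_sub]
        _ = ((Y * (1 - Z * Zᴴ)) * ((1 - Z * Zᴴ) * Yᴴ)).trace := by
            rw [show (Y * (1 - Z * Zᴴ)) * ((1 - Z * Zᴴ) * Yᴴ)
                = Y * ((1 - Z * Zᴴ) * (1 - Z * Zᴴ)) * Yᴴ by simp only [Matrix.mul_assoc],
              h1P]
            exact (Matrix.trace_mul_cycle Y (1 - Z * Zᴴ) Yᴴ).symm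
    have := trace_mul_conjTranspose_self_re_nonneg (Y * (1 - Z * Zᴴ))
    have hre := congrArg Complex.re hC
    simp only [Complex.sub_re] at hre
    rw [e]
    linarith
  -- combine
  rw [hLHS, ← habs]
  refine hCS.trans ?_
  rw [hfac1]
  have h4 : Real.sqrt (((Y * Z)ᴴ * (Y * Z)).trace.re) ≤ Real.sqrt ((Yᴴ * Y).trace.re) :=
    Real.sqrt_le_sqrt hfac2
  exact mul_le_mul_of_nonneg_left h4 (Real.sqrt_nonneg _)

end Part4

section Part5
variable {d : ℕ} {m : Type*} [Fintype m] [DecidableEq m]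
lemma trace_cmp2 (A : Matrix (Fin d) (Fin d) ℂ) :
    (cmp2 A).trace = (A.trace ^ 2 - (A * A).trace) / 2 := by
  have split := sum_split (fun i j => A i i * A j j - A i j * A j i)
  have h1 : ∑ i, ∑ j, (A i i * A j j - A i j * A j i)
      = A.trace ^ 2 - (A * A).trace := by
    have e1 : ∑ i, ∑ j, A i i * A j j = A.trace ^ 2 := by
      rw [pow_two, Matrix.trace, Finset.sum_mul_sum]; rfl
    have e2 : ∑ i, ∑ j, A i j * A j i = (A * A).trace := by
      simp only [Matrix.trace, Matrix.diag, Matrix.mul_apply]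
    simp only [Finset.sum_sub_distrib, e1, e2]
  have h2 : (∑ p : PairIdx d, (A p.1.2 p.1.2 * A p.1.1 p.1.1 - A p.1.2 p.1.1 * A p.1.1 p.1.2))
      = ∑ p : PairIdx d, (A p.1.1 p.1.1 * A p.1.2 p.1.2 - A p.1.1 p.1.2 * A p.1.2 p.1.1) :=
    Finset.sum_congr rfl fun p _ => by ring
  have h3 : (∑ i : Fin d, (A i i * A i i - A i i * A i i)) = 0 :=
    Finset.sum_eq_zero fun i _ => by ring
  rw [h1, h2, h3, add_zero, ← two_mul] at split
  have : (cmp2 A).trace = ∑ p : PairIdx d,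
      (A p.1.1 p.1.1 * A p.1.2 p.1.2 - A p.1.1 p.1.2 * A p.1.2 p.1.1) := rfl
  rw [this, eq_div_iff (two_ne_zero), mul_comm, split]

lemma sq_sum_sqrt (g : Fin d → ℝ) (hg : ∀ i, 0 ≤ g i) :
    (∑ i, Real.sqrt (g i)) ^ 2 = (∑ i, g i)
      + 2 * ∑ p : PairIdx d, Real.sqrt (g p.1.1) * Real.sqrt (g p.1.2) := by
  have split := sum_split (fun i j => Real.sqrt (g i) * Real.sqrt (g j))
  have h1 : (∑ i, Real.sqrt (g i)) ^ 2 = ∑ i, ∑ j, Real.sqrt (g i) * Real.sqrt (g j) := by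
    rw [pow_two, Finset.sum_mul_sum]
  have h2 : (∑ p : PairIdx d, Real.sqrt (g p.1.2) * Real.sqrt (g p.1.1))
      = ∑ p : PairIdx d, Real.sqrt (g p.1.1) * Real.sqrt (g p.1.2) :=
    Finset.sum_congr rfl fun p _ => by ring
  have h3 : (∑ i : Fin d, Real.sqrt (g i) * Real.sqrt (g i)) = ∑ i, g i :=
    Finset.sum_congr rfl fun i _ => Real.mul_self_sqrt (hg i)
  rw [h1, split, h2, h3]
  ring

lemma unitary_diag_mul (U : Matrix m m ℂ) (hU2 : Uᴴ * U = 1) (f f' : m → ℂ) :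
    (U * Matrix.diagonal f * Uᴴ) * (U * Matrix.diagonal f' * Uᴴ)
      = U * Matrix.diagonal (fun i => f i * f' i) * Uᴴ := by
  have h3 : Uᴴ * (U * Matrix.diagonal f' * Uᴴ) = Matrix.diagonal f' * Uᴴ := by
    rw [← Matrix.mul_assoc, ← Matrix.mul_assoc, hU2, Matrix.one_mul]
  rw [Matrix.mul_assoc (U * Matrix.diagonal f) Uᴴ, h3, Matrix.mul_assoc U,
    ← Matrix.mul_assoc (Matrix.diagonal f), Matrix.diagonal_mul_diagonal, ← Matrix.mul_assoc]

-- mconj lemmas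
lemma mconj_mul (A B : Matrix m m ℂ) : mconj (A * B) = mconj A * mconj B := by
  ext i j
  simp [mconj, Matrix.mul_apply, Matrix.map_apply, map_sum]

lemma trace_mconj (A : Matrix m m ℂ) : (mconj A).trace = star A.trace := by
  simp [mconj, Matrix.trace, Matrix.diag, Matrix.map_apply, star_sum]

lemma mconj_conjTranspose_of_hermitian {A : Matrix m m ℂ} (hA : Aᴴ = A) :
    (mconj A)ᴴ = mconj A := by
  ext i j
  have h := congrFun (congrFun hA i) j
  simp only [Matrix.conjTranspose_apply, mconj, Matrix.map_apply, ← Complex.star_def] at *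
  rw [star_star, ← h, star_star]

lemma mconj_posSemidef {A : Matrix m m ℂ} (hA : A.PosSemidef) : (mconj A).PosSemidef := by
  have : mconj A = Aᵀ := by
    ext i j
    have h := congrFun (congrFun hA.1 j) i
    simp only [Matrix.conjTranspose_apply] at h
    simp only [mconj, Matrix.map_apply, Matrix.transpose_apply, ← Complex.star_def]
    exact h
  rw [this]
  exact hA.transpose

lemma smul_half_posSemidef {A : Matrix m m ℂ} (hA : A.PosSemidef) :
    (((1 : ℂ) / 2) • A).PosSemidef := by
  exact hA.smul (by rw [Complex.le_def]; norm_num)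

end Part5

lemma final_scalar (e P s M F : ℝ) (he : 1 ≤ e) (hs : 1 ≤ e * s) (hsP : s ≤ P) (hP1 : P ≤ 1)
    (hM0 : 0 ≤ M) (hM : M ^ 2 ≤ e * (P - s)) (hF0 : 0 ≤ F)
    (hF : F ^ 2 ≤ s + Real.sqrt ((1 - P) * (1 - s))) :
    F ≤ Real.sqrt (1 / e + (1 / e) * Real.sqrt ((e - 1) ^ 2 - (e - 1) * M ^ 2)) := by
  have he0 : 0 < e := lt_of_lt_of_le one_pos he
  set a : ℝ := 1 - P with ha
  set b : ℝ := 1 - s with hb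
  have ha0 : 0 ≤ a := by simp [ha]; linarith
  have hb0 : 0 ≤ b := by simp [hb]; linarith
  set u : ℝ := Real.sqrt (a * b) with hu
  have hu0 : 0 ≤ u := Real.sqrt_nonneg _
  have hu2 : u ^ 2 = a * b := Real.sq_sqrt (mul_nonneg ha0 hb0)
  have h2u : 2 * u ≤ a + b := by nlinarith [sq_nonneg (a - b)]
  set c : ℝ := e * s - 1 with hc
  have hc0 : 0 ≤ c := by simp [hc]; linarith
  set inner : ℝ := (e - 1) ^ 2 - e * (e - 1) * (P - s) with hinner
  have hinner0 : 0 ≤ inner := by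
    have h1 : e * (P - s) ≤ e - 1 := by nlinarith
    nlinarith
  set w : ℝ := Real.sqrt inner with hw
  have hw0 : 0 ≤ w := Real.sqrt_nonneg _
  have hw2 : w ^ 2 = inner := Real.sq_sqrt hinner0
  -- key step : c + e * u ≤ w
  have hkey : c + e * u ≤ w := by
    have hsq : (c + e * u) ^ 2 ≤ w ^ 2 := by
      have hid : w ^ 2 - (c + e * u) ^ 2 = e * c * (a + b - 2 * u) + e ^ 2 * (a * b - u ^ 2) := by
        rw [hw2, hinner, hc, ha, hb]; ring
      nlinarith [mul_nonneg (mul_nonneg he0.le hc0) (by linarith : (0:ℝ) ≤ a + b - 2 * u)]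
    calc c + e * u = Real.sqrt ((c + e * u) ^ 2) :=
          (Real.sqrt_sq (by positivity)).symm
      _ ≤ Real.sqrt (w ^ 2) := Real.sqrt_le_sqrt hsq
      _ = w := Real.sqrt_sq hw0
  have hstep2 : s + u ≤ 1 / e + w / e := by
    rw [← add_div, le_div_iff₀ he0]
    nlinarith
  have hstep3 : w ≤ Real.sqrt ((e - 1) ^ 2 - (e - 1) * M ^ 2) := by
    refine Real.sqrt_le_sqrt ?_
    have : (e - 1) * M ^ 2 ≤ (e - 1) * (e * (P - s)) :=
      mul_le_mul_of_nonneg_left hM (by linarith)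
    rw [hinner]; nlinarith
  refine (Real.le_sqrt hF0 ?_).mpr ?_
  · have : 0 ≤ Real.sqrt ((e - 1) ^ 2 - (e - 1) * M ^ 2) := Real.sqrt_nonneg _
    positivity
  calc F ^ 2 ≤ s + u := hF
    _ ≤ 1 / e + w / e := hstep2
    _ ≤ 1 / e + (1 / e) * Real.sqrt ((e - 1) ^ 2 - (e - 1) * M ^ 2) := by
        have h1e : (0:ℝ) ≤ 1 / e := by positivity
        have : w / e = (1 / e) * w := by ring
        rw [this]
        exact add_le_add_right (mul_le_mul_of_nonneg_left hstep3 h1e) _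

theorem stmt14 (d : ℕ) (ρ : Matrix (Fin d) (Fin d) ℂ) (hρ : IsDensityMatrix ρ) :
    MRe ρ ≥ 1 - Real.sqrt (1 / (d : ℝ) +
      (1 / (d : ℝ)) * Real.sqrt (((d : ℝ) - 1) ^ 2 - ((d : ℝ) - 1) * Mtr ρ ^ 2)) := by
  obtain ⟨hPSD, htr⟩ := hρ
  -- dimension at least 1
  have hd : 1 ≤ d := by
    by_contra hcon
    have hd0 : d = 0 := by omega
    subst hd0
    simp [Matrix.trace] at htr
  have hdR : (1 : ℝ) ≤ (d : ℝ) := Nat.one_le_cast.mpr hd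
  have hd0 : (0 : ℝ) < (d : ℝ) := by linarith
  have hρH : ρᴴ = ρ := hPSD.1
  rw [ge_iff_le, MRe]
  refine sub_le_sub_left ?_ 1
  set σ := reState ρ with hσdef
  have hσPSD : σ.PosSemidef := by
    rw [hσdef, reState]
    exact smul_half_posSemidef (hPSD.add (mconj_posSemidef hPSD))
  have hσtr : σ.trace = 1 := by
    rw [hσdef, reState, Matrix.trace_smul, Matrix.trace_add, trace_mconj, htr]
    simp
    norm_num
  have hσH : σᴴ = σ := hσPSD.1
  -- square roots
  have hR : psqrt ρ * psqrt ρ = ρ := psqrt_mul_self_of hPSD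
  set R := psqrt ρ with hRdef
  have hRH : Rᴴ = R := psqrt_conjTranspose_of hPSD
  have hRR : R * R = ρ := hR
  have hS : psqrt σ * psqrt σ = σ := psqrt_mul_self_of hσPSD
  set S := psqrt σ with hSdef
  have hSH : Sᴴ = S := psqrt_conjTranspose_of hσPSD
  have hSS : S * S = σ := hS
  set K := R * S with hK
  have hH1 : R * σ * R = K * Kᴴ := by
    calc R * σ * R = R * (S * S) * R := by rw [hSS]
      _ = (R * S) * (S * R) := by simp only [Matrix.mul_assoc]
      _ = K * Kᴴ := by rw [hK, Matrix.conjTranspose_mul, hRH, hSH]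
  have hKK : (K * Kᴴ).PosSemidef := Matrix.posSemidef_self_mul_conjTranspose K
  obtain ⟨U, g, hU1, hU2, hg, hspec⟩ := hKK.exists_unitary_diag
  -- fidelity equals sum of square roots of eigenvalues
  have hfid : fidelity ρ σ = ∑ i, Real.sqrt (g i) := by
    rw [fidelity, ← hRdef, hH1, hspec, psqrt_unitary_diag U hU2 g hg,
      trace_unitary_diag U hU2, ← Complex.ofReal_sum, Complex.ofReal_re]
  set F : ℝ := ∑ i, Real.sqrt (g i) with hFdef
  have hF0 : 0 ≤ F := Finset.sum_nonneg fun i _ => Real.sqrt_nonneg _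
  -- scalar quantities
  set P : ℝ := ((ρ * ρ).trace).re with hPdef
  set Q : ℝ := ((ρ * mconj ρ).trace).re with hQdef
  set sR : ℝ := ((ρ * σ).trace).re with hsRdef
  -- trace identities
  have hρσC : (ρ * σ).trace = ((1 : ℂ)/2) * ((ρ * ρ).trace + (ρ * mconj ρ).trace) := by
    rw [hσdef, reState, Matrix.mul_smul, Matrix.trace_smul, Matrix.mul_add, Matrix.trace_add]
    rw [smul_eq_mul]
  have hsR : sR = (P + Q) / 2 := by
    rw [hsRdef, hρσC]
    simp [Complex.mul_re, Complex.add_re]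
    ring
  have hσσre : ((σ * σ).trace).re = (P + Q) / 2 := by
    have e1 : σ * σ = ((1 : ℂ)/2) • (((1 : ℂ)/2) • (ρ * ρ + ρ * mconj ρ
        + (mconj ρ * ρ + mconj ρ * mconj ρ))) := by
      rw [hσdef, reState]
      rw [Matrix.smul_mul, Matrix.mul_smul, Matrix.add_mul, Matrix.mul_add, Matrix.mul_add]
    have e2 : (σ * σ).trace = ((1 : ℂ)/2) * (((1 : ℂ)/2) * ((ρ * ρ).trace + (ρ * mconj ρ).trace
        + ((ρ * mconj ρ).trace + star ((ρ * ρ).trace)))) := by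
      rw [e1, Matrix.trace_smul, Matrix.trace_smul, smul_eq_mul, smul_eq_mul]
      congr 2
      rw [Matrix.trace_add, Matrix.trace_add, Matrix.trace_add]
      congr 1
      congr 1
      · exact Matrix.trace_mul_comm (mconj ρ) ρ
      · rw [← mconj_mul, trace_mconj]
    rw [e2]
    simp [Complex.mul_re, Complex.add_re, Complex.conj_re]
    ring
  -- s ≤ P  (via trace of D² ≥ 0)
  set D := ρ - mconj ρ with hD
  have hDH : Dᴴ = D := by
    rw [hD, Matrix.conjTranspose_sub, hρH, mconj_conjTranspose_of_hermitian hρH]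
  have hDDtr : ((D * D).trace).re = 2 * P - 2 * Q := by
    have e1 : D * D = ρ * ρ - ρ * mconj ρ - mconj ρ * ρ + mconj ρ * mconj ρ := by
      rw [hD, Matrix.sub_mul, Matrix.mul_sub, Matrix.mul_sub]
      abel
    have e2 : (D * D).trace = (ρ * ρ).trace - (ρ * mconj ρ).trace - (ρ * mconj ρ).trace
        + star ((ρ * ρ).trace) := by
      rw [e1, Matrix.trace_add, Matrix.trace_sub, Matrix.trace_sub]
      rw [Matrix.trace_mul_comm (mconj ρ) ρ, ← mconj_mul, trace_mconj]
    rw [e2]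
    simp [Complex.add_re, Complex.sub_re, Complex.conj_re]
    ring
  have hDDnonneg : 0 ≤ ((D * D).trace).re := by
    have := trace_mul_conjTranspose_self_re_nonneg D
    rwa [hDH] at this
  have hQP : Q ≤ P := by rw [hDDtr] at hDDnonneg; linarith
  have hsP : sR ≤ P := by rw [hsR]; linarith
  -- P ≤ 1
  have hP1 : P ≤ 1 := by
    obtain ⟨W, f, hW1, hW2, hf, hspecρ⟩ := hPSD.exists_unitary_diag
    have hsumf : ∑ i, f i = 1 := by
      have h1 : ρ.trace = ((∑ i, f i : ℝ) : ℂ) := by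
        rw [hspecρ, trace_unitary_diag W hW2, Complex.ofReal_sum]
      rw [htr] at h1
      exact_mod_cast h1.symm
    have hPval : P = ∑ i, f i * f i := by
      have h2 : ρ * ρ = W * Matrix.diagonal (fun i => ((f i : ℂ)) * ((f i : ℂ))) * Wᴴ := by
        rw [hspecρ]; exact unitary_diag_mul W hW2 _ _
      have h3 : (ρ * ρ).trace = ((∑ i, f i * f i : ℝ) : ℂ) := by
        rw [h2, trace_unitary_diag W hW2, Complex.ofReal_sum]
        push_cast
        rfl
      rw [hPdef, h3, Complex.ofReal_re]
    rw [hPval, ← hsumf]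
    calc ∑ i, f i * f i ≤ ∑ i, f i * (∑ j, f j) := by
          refine Finset.sum_le_sum fun i _ => ?_
          exact mul_le_mul_of_nonneg_left
            (Finset.single_le_sum (fun j _ => hf j) (Finset.mem_univ i)) (hf i)
      _ = (∑ i, f i) * (∑ j, f j) := by rw [← Finset.sum_mul]
      _ = ∑ i, f i := by rw [hsumf, one_mul]
  -- d * sR ≥ 1
  have hds : 1 ≤ (d : ℝ) * sR := by
    set c : ℂ := ((1 / (d : ℝ) : ℝ) : ℂ) with hc
    set E : Matrix (Fin d) (Fin d) ℂ := σ - c • 1 with hE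
    have hEH : Eᴴ = E := by
      rw [hE, Matrix.conjTranspose_sub, hσH, Matrix.conjTranspose_smul,
        Matrix.conjTranspose_one, hc]
      norm_num
    have e1 : (σ - c • 1) * (σ - c • 1)
        = σ * σ - c • σ - c • σ + (c * c) • (1 : Matrix (Fin d) (Fin d) ℂ) := by
      rw [Matrix.sub_mul, Matrix.mul_sub, Matrix.mul_sub, Matrix.smul_mul, Matrix.smul_mul,
        Matrix.mul_smul, Matrix.one_mul, Matrix.one_mul, Matrix.mul_one, smul_smul]
      abel
    have hEE : (E * Eᴴ).trace = (σ * σ).trace - c - c + c * c * (d : ℂ) := by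
      rw [hEH, hE, e1]
      simp only [Matrix.trace_add, Matrix.trace_sub, Matrix.trace_smul, hσtr,
        Matrix.trace_one, smul_eq_mul, Fintype.card_fin]
      push_cast
      ring
    have hre : ((E * Eᴴ).trace).re
        = (P + Q)/2 - (1/(d:ℝ)) - (1/(d:ℝ)) + (1/(d:ℝ)) * (1/(d:ℝ)) * (d:ℝ) := by
      rw [hEE]
      simp [Complex.sub_re, Complex.add_re, Complex.mul_re, hc, hσσre, Complex.ofReal_re,
        Complex.ofReal_im]
    have h0 := trace_mul_conjTranspose_self_re_nonneg E
    rw [hre] at h0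
    have hinv : (1/(d:ℝ)) * (1/(d:ℝ)) * (d:ℝ) = 1/(d:ℝ) := by field_simp
    rw [hinv] at h0
    have hs1 : 1/(d:ℝ) ≤ sR := by rw [hsR]; linarith
    calc (1:ℝ) = (d:ℝ) * (1/(d:ℝ)) := by field_simp
      _ ≤ (d:ℝ) * sR := mul_le_mul_of_nonneg_left hs1 (le_of_lt hd0)
  -- trace norm bound : (Mtr ρ)² ≤ d (P - sR)
  have hDDpsd : (Dᴴ * D).PosSemidef := Matrix.posSemidef_conjTranspose_mul_self D
  obtain ⟨V, h, hV1, hV2, hh, hspecD⟩ := hDDpsd.exists_unitary_diag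
  have hMval : Mtr ρ = (1/2) * ∑ i, Real.sqrt (h i) := by
    rw [Mtr, trNorm, ← hD, hspecD, psqrt_unitary_diag V hV2 h hh,
      trace_unitary_diag V hV2, ← Complex.ofReal_sum, Complex.ofReal_re]
  have hsum_h : ∑ i, h i = 2 * P - 2 * Q := by
    have h1 : (Dᴴ * D).trace = ((∑ i, h i : ℝ) : ℂ) := by
      rw [hspecD, trace_unitary_diag V hV2, Complex.ofReal_sum]
    rw [hDH] at h1
    have := congrArg Complex.re h1
    rw [hDDtr, Complex.ofReal_re] at this
    exact this.symm
  have hM0 : 0 ≤ Mtr ρ := by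
    rw [hMval]
    have : 0 ≤ ∑ i, Real.sqrt (h i) := Finset.sum_nonneg fun i _ => Real.sqrt_nonneg _
    linarith
  have hMsq : (Mtr ρ)^2 ≤ (d:ℝ) * (P - sR) := by
    have hcs := Finset.sum_mul_sq_le_sq_mul_sq Finset.univ (fun _ : Fin d => (1:ℝ))
      (fun i => Real.sqrt (h i))
    simp only [one_mul, one_pow, Finset.sum_const, Finset.card_univ, Fintype.card_fin,
      nsmul_eq_mul, mul_one] at hcs
    have hsq : ∑ i, (Real.sqrt (h i))^2 = ∑ i, h i :=
      Finset.sum_congr rfl fun i _ => Real.sq_sqrt (hh i)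
    rw [hsq, hsum_h] at hcs
    rw [hMval, mul_pow, hsR]
    nlinarith
  -- superfidelity
  have hstar := sq_sum_sqrt g hg
  have hU2' : (cmp2 U)ᴴ * cmp2 U = 1 := by
    rw [cmp2_conjTranspose, ← cmp2_mul, hU2, cmp2_one]
  have hT : ((psqrt (cmp2 (K * Kᴴ))).trace).re
      = ∑ p : PairIdx d, Real.sqrt (g p.1.1) * Real.sqrt (g p.1.2) := by
    have hc2 : cmp2 (K * Kᴴ) = cmp2 U
        * Matrix.diagonal (fun p : PairIdx d => ((g p.1.1 * g p.1.2 : ℝ) : ℂ)) * (cmp2 U)ᴴ := by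
      have hfun : (fun p : PairIdx d => ((g p.1.1 : ℂ)) * ((g p.1.2 : ℂ)))
          = (fun p : PairIdx d => ((g p.1.1 * g p.1.2 : ℝ) : ℂ)) := by
        funext p; push_cast; rfl
      rw [hspec, cmp2_mul, cmp2_mul, cmp2_diagonal, cmp2_conjTranspose, hfun]
    rw [hc2, psqrt_unitary_diag (cmp2 U) hU2' _ (fun p => mul_nonneg (hg _) (hg _)),
      trace_unitary_diag _ hU2', ← Complex.ofReal_sum, Complex.ofReal_re]
    exact Finset.sum_congr rfl fun p _ => Real.sqrt_mul (hg _) _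
  have hHoeld := trace_psqrt_mul_le (cmp2 R) (cmp2 S)
  rw [← cmp2_mul] at hHoeld
  have hcρ : (cmp2 R)ᴴ * cmp2 R = cmp2 ρ := by
    rw [cmp2_conjTranspose, hRH, ← cmp2_mul, hRR]
  have hcσ : (cmp2 S)ᴴ * cmp2 S = cmp2 σ := by
    rw [cmp2_conjTranspose, hSH, ← cmp2_mul, hSS]
  have hccT : cmp2 (R * S) * (cmp2 (R * S))ᴴ = cmp2 (K * Kᴴ) := by
    rw [cmp2_conjTranspose, ← cmp2_mul, hK]
  rw [hccT, hcρ, hcσ] at hHoeld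
  have htrcρ : ((cmp2 ρ).trace).re = (1 - P)/2 := by
    rw [trace_cmp2, htr]
    simp [Complex.sub_re, Complex.div_re, Complex.normSq, hPdef]
  have htrcσ : ((cmp2 σ).trace).re = (1 - sR)/2 := by
    rw [trace_cmp2, hσtr]
    have h2 : ((σ * σ).trace).re = sR := by rw [hσσre, hsR]
    simp [Complex.sub_re, Complex.div_re, Complex.normSq, h2]
  rw [htrcρ, htrcσ, hT] at hHoeld
  -- sum of g equals sR
  have hsum_g : ∑ i, g i = sR := by
    have htrK : (K * Kᴴ).trace = (ρ * σ).trace := by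
      rw [← hH1, Matrix.trace_mul_cycle, hRR]
    have h1 : (K * Kᴴ).trace = ((∑ i, g i : ℝ) : ℂ) := by
      rw [hspec, trace_unitary_diag U hU2, Complex.ofReal_sum]
    rw [htrK] at h1
    have := congrArg Complex.re h1
    rw [Complex.ofReal_re] at this
    exact this.symm
  -- superfidelity inequality
  have h1P : (0:ℝ) ≤ 1 - P := by linarith
  have h1s : (0:ℝ) ≤ 1 - sR := by linarith
  have hcomb : 2 * (Real.sqrt ((1 - P)/2) * Real.sqrt ((1 - sR)/2))
      = Real.sqrt ((1 - P) * (1 - sR)) := by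
    rw [← Real.sqrt_mul (by linarith : (0:ℝ) ≤ (1-P)/2)]
    have e4 : ((1-P)/2) * ((1-sR)/2) = ((1-P)*(1-sR)) * (1/4) := by ring
    have hq : Real.sqrt (1/4) = 1/2 := by
      rw [show (1/4 : ℝ) = (1/2)^2 by norm_num, Real.sqrt_sq (by norm_num)]
    rw [e4, Real.sqrt_mul (mul_nonneg h1P h1s), hq]
    ring
  have hsuper : F^2 ≤ sR + Real.sqrt ((1 - P) * (1 - sR)) := by
    rw [hFdef, hstar, hsum_g, ← hcomb]
    have := mul_le_mul_of_nonneg_left hHoeld (by norm_num : (0:ℝ) ≤ 2)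
    linarith
  -- conclusion
  have hfinal := final_scalar (d:ℝ) P sR (Mtr ρ) F hdR hds hsP hP1 hM0 hMsq hF0 hsuper
  rw [hfid]
  exact hfinal
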